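/- For each prime p with p ≡ 1 (mod 4) there exists a prime q with q ≡ 3 (mod 4) such that (p/q) = -1. -/

import Mathlib

/-- Legendre's second auxiliary lemma: for each prime `p ≡ 1 (mod 4)` there is a prime
`q ≡ 3 (mod 4)` with `(p/q) = -1`. -/
theorem legendre_lemma_two (p : ℕ) (hp : p.Prime) (hp4 : p % 4 = 1) :
    ∃ q : ℕ, ∃ hq : q.Prime, q % 4 = 3 ∧ @legendreSym q ⟨hq⟩ (p : ℤ) = -1 := by
  haveI hpF : Fact p.Prime := ⟨hp⟩
  have hp2 : p ≠ 2 := by rintro rfl; norm_num at hp4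
  obtain ⟨c, hc⟩ := FiniteField.exists_nonsquare (F := ZMod p)
    (by rw [ZMod.ringChar_zmod_n]; exact hp2)
  have hc0 : c ≠ 0 := by rintro rfl; exact hc ⟨0, by simp⟩
  have hcop : Nat.Coprime 4 p := by
    have h2 : Nat.Coprime 2 p := (Nat.coprime_primes Nat.prime_two hp).mpr fun h => hp2 h.symm
    simpa using Nat.Coprime.mul h2 h2
  set e := ZMod.chineseRemainder hcop with he
  set a : ZMod (4 * p) := e.symm (3, c) with ha
  haveI : NeZero (4 * p) := ⟨Nat.mul_ne_zero (by norm_num) hp.ne_zero⟩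
  have hprodU : IsUnit ((3, c) : ZMod 4 × ZMod p) :=
    isUnit_iff_exists_inv.mpr ⟨(3, c⁻¹), by
      rw [Prod.mk_mul_mk, mul_inv_cancel₀ hc0]
      exact Prod.ext_iff.mpr ⟨show (3 * 3 : ZMod 4) = 1 by decide, rfl⟩⟩
  have haU : IsUnit a := hprodU.map e.symm
  obtain ⟨q, _, hq, hqa⟩ := Nat.forall_exists_prime_gt_and_eq_mod haU 0
  have hqe : ((q : ZMod 4 × ZMod p)) = (3, c) := by
    have := congrArg e hqa
    rwa [map_natCast e q, ha, RingEquiv.apply_symm_apply] at this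
  have hq4 : (q : ZMod 4) = 3 := by
    have := congrArg Prod.fst hqe
    simpa [Prod.fst_natCast] using this
  have hqp : (q : ZMod p) = c := by
    have := congrArg Prod.snd hqe
    simpa [Prod.snd_natCast] using this
  have hqmod : q % 4 = 3 := by
    have := ZMod.val_natCast (n := 4) q
    rw [hq4] at this
    exact this.symm.trans (by decide)
  have hq2 : q ≠ 2 := by rintro rfl; norm_num at hqmod
  have hleg : @legendreSym p ⟨hp⟩ (q : ℤ) = -1 := by
    rw [legendreSym.eq_neg_one_iff' (p := p), hqp]
    exact hc
  refine ⟨q, hq, hqmod, ?_⟩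
  rw [@legendreSym.quadratic_reciprocity_one_mod_four p q ⟨hp⟩ ⟨hq⟩ hp4 hq2]
  exact hleg
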